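/- Let Q be an open polygonal curve in ℝ³ with total curvature strictly less than π/2, starting at q₀ with first direction d = (q₁ - q₀)/‖q₁ - q₀‖. Then every point x of Q other than q₀ satisfies ⟨x - q₀, d⟩ > 0; i.e., the curve minus its initial point lies strictly in the open half-space on the positive side of the normal plane at q₀. -/

import Mathlib

open Real InnerProductGeometry

/-- The piecewise linear path through the points `q 0, q 1, q 2, …`. -/
noncomputable def plPath (q : ℕ → EuclideanSpace ℝ (Fin 3)) (t : ℝ) :
    EuclideanSpace ℝ (Fin 3) :=
  q ⌊t⌋₊ + (t - ⌊t⌋₊) • (q (⌊t⌋₊ + 1) - q ⌊t⌋₊)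

variable {V : Type*} [NormedAddCommGroup V] [InnerProductSpace ℝ V]

lemma norm_sub_proj (x y : V) (hx : ‖x‖ = 1) (hy : ‖y‖ = 1) :
    ‖x - (inner ℝ x y : ℝ) • y‖ = Real.sqrt (1 - (inner ℝ x y : ℝ)^2) := by
  have h2 : ‖x - (inner ℝ x y : ℝ) • y‖^2 = 1 - (inner ℝ x y : ℝ)^2 := by
    rw [norm_sub_sq_real, real_inner_smul_right, norm_smul, hx, hy, Real.norm_eq_abs,
      mul_one, sq_abs]
    ring
  rw [← Real.sqrt_sq (norm_nonneg _), h2]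

lemma cos_add_le_inner (x y z : V) (hx : ‖x‖ = 1) (hy : ‖y‖ = 1) (hz : ‖z‖ = 1) :
    Real.cos (angle x y + angle y z) ≤ (inner ℝ x z : ℝ) := by
  have hca : Real.cos (angle x y) = (inner ℝ x y : ℝ) := by rw [cos_angle, hx, hy]; simp
  have hcb : Real.cos (angle y z) = (inner ℝ y z : ℝ) := by rw [cos_angle, hy, hz]; simp
  have hsa : Real.sin (angle x y) = Real.sqrt (1 - (inner ℝ x y : ℝ)^2) := by
    rw [angle, Real.sin_arccos, hx, hy]; simp
  have hsb : Real.sin (angle y z) = Real.sqrt (1 - (inner ℝ y z : ℝ)^2) := by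
    rw [angle, Real.sin_arccos, hy, hz]; simp
  have hxz : (inner ℝ x z : ℝ) =
      (inner ℝ (x - (inner ℝ x y : ℝ) • y) (z - (inner ℝ y z : ℝ) • y) : ℝ)
        + (inner ℝ x y : ℝ) * (inner ℝ y z : ℝ) := by
    simp only [inner_sub_left, inner_sub_right, real_inner_smul_left, real_inner_smul_right,
      real_inner_self_eq_norm_sq, hy, real_inner_comm y x]
    ring
  have hcs : -(‖x - (inner ℝ x y : ℝ) • y‖ * ‖z - (inner ℝ y z : ℝ) • y‖) ≤
      (inner ℝ (x - (inner ℝ x y : ℝ) • y) (z - (inner ℝ y z : ℝ) • y) : ℝ) :=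
    neg_le_of_abs_le (abs_real_inner_le_norm _ _)
  have h1 : ‖x - (inner ℝ x y : ℝ) • y‖ = Real.sqrt (1 - (inner ℝ x y : ℝ)^2) :=
    norm_sub_proj x y hx hy
  have h2 : ‖z - (inner ℝ y z : ℝ) • y‖ = Real.sqrt (1 - (inner ℝ y z : ℝ)^2) := by
    have h := norm_sub_proj z y hz hy
    rw [real_inner_comm y z] at h
    exact h
  rw [h1, h2] at hcs
  rw [Real.cos_add, hca, hcb, hsa, hsb, hxz]
  linarith

lemma angle_triangle' (x y z : V) : angle x z ≤ angle x y + angle y z := by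
  by_cases hsum : Real.pi ≤ angle x y + angle y z
  · exact le_trans (angle_le_pi x z) hsum
  push_neg at hsum
  by_cases hx : x = 0
  · simp [hx]; linarith [angle_nonneg y z]
  by_cases hy : y = 0
  · simp [hy]; linarith [angle_le_pi x z]
  by_cases hz : z = 0
  · simp [hz]; linarith [angle_nonneg x y]
  set x' := ‖x‖⁻¹ • x with hx'
  set y' := ‖y‖⁻¹ • y with hy'
  set z' := ‖z‖⁻¹ • z with hz'
  have hnx : ‖x'‖ = 1 := norm_smul_inv_norm hx
  have hny : ‖y'‖ = 1 := norm_smul_inv_norm hy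
  have hnz : ‖z'‖ = 1 := norm_smul_inv_norm hz
  have hpx : (0:ℝ) < ‖x‖⁻¹ := inv_pos.2 (norm_pos_iff.2 hx)
  have hpy : (0:ℝ) < ‖y‖⁻¹ := inv_pos.2 (norm_pos_iff.2 hy)
  have hpz : (0:ℝ) < ‖z‖⁻¹ := inv_pos.2 (norm_pos_iff.2 hz)
  have e1 : angle x' y' = angle x y := by
    rw [hx', hy', angle_smul_left_of_pos _ _ hpx, angle_smul_right_of_pos _ _ hpy]
  have e2 : angle y' z' = angle y z := by
    rw [hy', hz', angle_smul_left_of_pos _ _ hpy, angle_smul_right_of_pos _ _ hpz]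
  have e3 : angle x' z' = angle x z := by
    rw [hx', hz', angle_smul_left_of_pos _ _ hpx, angle_smul_right_of_pos _ _ hpz]
  rw [← e1, ← e2, ← e3]
  have key := cos_add_le_inner x' y' z' hnx hny hnz
  have hcz : Real.cos (angle x' z') = (inner ℝ x' z' : ℝ) := by
    rw [cos_angle, hnx, hnz]; simp
  have hkey : Real.cos (angle x' y' + angle y' z') ≤ Real.cos (angle x' z') := by
    rw [hcz]; exact key
  by_contra hcon
  push_neg at hcon
  have := Real.strictAntiOn_cos
    ⟨by linarith [angle_nonneg x' y', angle_nonneg y' z'], by rw [e1, e2]; exact hsum.le⟩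
    ⟨angle_nonneg x' z', angle_le_pi x' z'⟩ hcon
  linarith

/-- If an open polygonal curve `Q` with all consecutive vertices distinct has total
curvature strictly less than `π/2`, then every point of `Q` other than the initial
vertex `q 0` lies strictly in the open half-space on the positive side of the normal
plane at `q 0`, where the normal direction is `d = (q 1 - q 0)/‖q 1 - q 0‖`. -/
theorem polygon_in_open_halfspace (n : ℕ) (hn : 1 ≤ n)
    (q : ℕ → EuclideanSpace ℝ (Fin 3))
    (hcons : ∀ j < n, q j ≠ q (j + 1))
    (htc : ∑ m ∈ Finset.Ico 1 n,
      InnerProductGeometry.angle (q (m + 1) - q m) (q m - q (m - 1)) < Real.pi / 2) :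
    ∀ t ∈ Set.Icc (0 : ℝ) n, plPath q t ≠ q 0 →
      0 < (inner ℝ (plPath q t - q 0) (‖q 1 - q 0‖⁻¹ • (q 1 - q 0)) : ℝ) := by
  have hne : ∀ j < n, q (j + 1) - q j ≠ 0 := fun j hj =>
    sub_ne_zero.2 (fun h => hcons j hj h.symm)
  have h10 : q 1 - q 0 ≠ 0 := hne 0 hn
  -- partial-sum bound on the angle of each edge with the first edge
  have key : ∀ j, j < n → angle (q (j + 1) - q j) (q 1 - q 0) ≤
      ∑ m ∈ Finset.Ico 1 (j + 1), angle (q (m + 1) - q m) (q m - q (m - 1)) := by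
    intro j
    induction j with
    | zero =>
      intro _
      simp [angle_self h10]
    | succ j ih =>
      intro hj
      have hj' : j < n := Nat.lt_of_succ_lt hj
      have htri := angle_triangle' (q (j + 1 + 1) - q (j + 1)) (q (j + 1) - q j) (q 1 - q 0)
      rw [Finset.sum_Ico_succ_top (Nat.one_le_iff_ne_zero.2 (Nat.succ_ne_zero j))]
      have : (j + 1 : ℕ) - 1 = j := rfl
      rw [this]
      linarith [ih hj']
  -- each edge makes angle < π/2 with the first edge
  have hang : ∀ j, j < n → angle (q (j + 1) - q j) (q 1 - q 0) < Real.pi / 2 := by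
    intro j hj
    refine lt_of_le_of_lt (le_trans (key j hj) ?_) htc
    apply Finset.sum_le_sum_of_subset_of_nonneg
    · exact Finset.Ico_subset_Ico le_rfl hj
    · intro m _ _; exact angle_nonneg _ _
  -- each edge has positive inner product with the first edge
  have hedge : ∀ j, j < n → 0 < (inner ℝ (q (j + 1) - q j) (q 1 - q 0) : ℝ) := by
    intro j hj
    have hcos : 0 < Real.cos (angle (q (j + 1) - q j) (q 1 - q 0)) := by
      apply Real.cos_pos_of_mem_Ioo
      constructor
      · linarith [angle_nonneg (q (j + 1) - q j) (q 1 - q 0), Real.pi_pos]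
      · exact hang j hj
    have := cos_angle_mul_norm_mul_norm (q (j + 1) - q j) (q 1 - q 0)
    rw [← this]
    have h1 : 0 < ‖q (j + 1) - q j‖ := norm_pos_iff.2 (hne j hj)
    have h2 : 0 < ‖q 1 - q 0‖ := norm_pos_iff.2 h10
    positivity
  -- vertices
  have hv : ∀ k, k ≤ n → 0 ≤ (inner ℝ (q k - q 0) (q 1 - q 0) : ℝ) ∧
      (1 ≤ k → 0 < (inner ℝ (q k - q 0) (q 1 - q 0) : ℝ)) := by
    intro k
    induction k with
    | zero => intro _; simp
    | succ k ih =>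
      intro hk
      have hik := ih (Nat.le_of_succ_le hk)
      have hsplit : q (k + 1) - q 0 = (q (k + 1) - q k) + (q k - q 0) := by abel
      rw [hsplit, inner_add_left]
      have hp := hedge k (Nat.lt_of_succ_le hk)
      exact ⟨by linarith [hik.1], fun _ => by linarith [hik.1]⟩
  intro t ht hnq
  set j := ⌊t⌋₊ with hjdef
  have hjle : (j : ℝ) ≤ t := Nat.floor_le ht.1
  have hs : 0 ≤ t - (j : ℝ) := by linarith
  have hplsub : plPath q t - q 0 = (q j - q 0) + (t - j) • (q (j + 1) - q j) := by
    simp only [plPath, ← hjdef]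
    exact add_sub_right_comm _ _ _
  have hpos10 : (0:ℝ) < ‖q 1 - q 0‖⁻¹ := inv_pos.2 (norm_pos_iff.2 h10)
  rw [real_inner_smul_right, hplsub, inner_add_left, real_inner_smul_left]
  have hjn : j ≤ n := by
    have := Nat.floor_le_floor (R := ℝ) ht.2
    simpa using this
  rcases lt_or_eq_of_le hjn with hlt | heq
  · -- j < n
    have he := hedge j hlt
    rcases Nat.eq_zero_or_pos j with hj0 | hj1
    · -- j = 0 : need positive fractional part
      have hs0 : t - (j : ℝ) ≠ 0 := by
        intro h0
        apply hnq
        simp only [plPath, ← hjdef]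
        rw [h0, zero_smul, add_zero, hj0]
      have hspos : 0 < t - (j : ℝ) := lt_of_le_of_ne hs (Ne.symm hs0)
      have hz : (inner ℝ (q j - q 0) (q 1 - q 0) : ℝ) = 0 := by rw [hj0]; simp
      rw [hz, zero_add]
      exact mul_pos hpos10 (mul_pos hspos he)
    · have hA := (hv j hjn).2 hj1
      refine mul_pos hpos10 ?_
      nlinarith [mul_nonneg hs he.le]
  · -- j = n : then t = n and the fractional part is zero
    have hteq : t - (j : ℝ) = 0 := by
      have h1 : t ≤ (j : ℝ) := by rw [heq]; exact_mod_cast ht.2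
      linarith
    rw [hteq, zero_mul, add_zero]
    exact mul_pos hpos10 ((hv j hjn).2 (heq ▸ hn))
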